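/- If an infinite binary tree t : ({0,1}*) → {a,b} has a good branch (an infinite branch all of whose nodes are labelled a and which turns left infinitely often), then t has a left-most good branch, i.e. a good branch β such that no good branch of t is lexicographically strictly to the left of β. -/
import Mathlib


/-- Infinite binary trees over {a,b}; `true` = a, `false` = b. -/
abbrev Tree2 := List (Fin 2) → Bool

/-- The length-`n` prefix of a branch. -/
def pre (β : ℕ → Fin 2) (n : ℕ) : List (Fin 2) := List.ofFn (fun i : Fin n => β i)

/-- A branch is good: all its finite prefixes are labelled `a` and it turns left (0)
infinitely often. -/
def Good (t : Tree2) (β : ℕ → Fin 2) : Prop :=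
  (∀ n, t (pre β n) = true) ∧ (∀ m, ∃ n ≥ m, β n = 0)

/-- `β` is strictly to the left of `γ`. -/
def LeftOf (β γ : ℕ → Fin 2) : Prop :=
  ∃ n, (∀ i < n, β i = γ i) ∧ β n = 0 ∧ γ n = 1

/-- A branch passes through a node. -/
def Through (γ : ℕ → Fin 2) (v : List (Fin 2)) : Prop := pre γ v.length = v

open Classical in
/-- The next step of the leftmost branch from node `v`. -/
noncomputable def nextStep (t : Tree2) (v : List (Fin 2)) : Fin 2 :=
  if ∃ γ, Good t γ ∧ Through γ (v ++ [0]) then 0 else 1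

/-- Prefixes of the leftmost branch. -/
noncomputable def pfx (t : Tree2) : ℕ → List (Fin 2)
  | 0 => []
  | n + 1 => pfx t n ++ [nextStep t (pfx t n)]

lemma pre_succ (β : ℕ → Fin 2) (n : ℕ) : pre β (n + 1) = pre β n ++ [β n] := by
  rw [pre, List.ofFn_succ']
  simp [pre, Fin.last, List.concat_eq_append]

lemma length_pre (β : ℕ → Fin 2) (n : ℕ) : (pre β n).length = n := by
  simp [pre]

lemma through_succ {γ : ℕ → Fin 2} {v : List (Fin 2)} (h : Through γ v) :
    Through γ (v ++ [γ v.length]) := by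
  unfold Through at *
  rw [List.length_append, List.length_singleton, pre_succ, h]

lemma length_pfx (t : Tree2) (n : ℕ) : (pfx t n).length = n := by
  induction n with
  | zero => rfl
  | succ n ih => simp [pfx, ih]

/-- Invariant: there is a good branch through every `pfx t n`. -/
lemma good_through_pfx (t : Tree2) (h : ∃ β, Good t β) (n : ℕ) :
    ∃ γ, Good t γ ∧ Through γ (pfx t n) := by
  induction n with
  | zero => obtain ⟨γ, hγ⟩ := h; exact ⟨γ, hγ, rfl⟩
  | succ n ih =>
    obtain ⟨γ, hγ, hth⟩ := ih
    show ∃ γ, Good t γ ∧ Through γ (pfx t n ++ [nextStep t (pfx t n)])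
    unfold nextStep
    split
    · assumption
    · rename_i hno
      refine ⟨γ, hγ, ?_⟩
      have := through_succ hth
      have hne : γ (pfx t n).length ≠ 0 := by
        intro h0
        exact hno ⟨γ, hγ, by rwa [h0] at this⟩
      have : γ (pfx t n).length = 1 := by omega
      rwa [this] at ‹Through γ (pfx t n ++ [γ (pfx t n).length])›

/-- If a good branch goes through `pfx t n` then it agrees with the leftmost
choice or the leftmost choice is 0. -/
lemma nextStep_zero_of_through {t : Tree2} {γ : ℕ → Fin 2} (hγ : Good t γ) (n : ℕ)
    (hth : Through γ (pfx t n)) (h0 : γ n = 0) : nextStep t (pfx t n) = 0 := by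
  unfold nextStep
  rw [if_pos]
  refine ⟨γ, hγ, ?_⟩
  have := through_succ hth
  rwa [length_pfx, h0] at this

theorem exists_leftmost_good_branch (t : Tree2) (h : ∃ β, Good t β) :
    ∃ β, Good t β ∧ ∀ γ, Good t γ → ¬ LeftOf γ β := by
  set β : ℕ → Fin 2 := fun n => nextStep t (pfx t n) with hβ
  have hpre : ∀ n, pre β n = pfx t n := by
    intro n
    induction n with
    | zero => rfl
    | succ n ih => rw [pre_succ, ih]; rfl
  -- key: any good branch through `pfx t n` with γ n = 0 forces β n = 0
  have hkey : ∀ γ, Good t γ → ∀ n, Through γ (pfx t n) → γ n = 0 → β n = 0 :=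
    fun γ hγ n hth h0 => nextStep_zero_of_through hγ n hth h0
  have hlab : ∀ n, t (pre β n) = true := by
    intro n
    obtain ⟨γ, hγ, hth⟩ := good_through_pfx t h n
    rw [hpre]
    have : pre γ n = pfx t n := by
      have := hth; unfold Through at this; rwa [length_pfx] at this
    rw [← this]; exact hγ.1 n
  have hleft : ∀ m, ∃ n ≥ m, β n = 0 := by
    intro m
    by_contra hc
    push_neg at hc
    have hc' : ∀ n ≥ m, β n = 1 := by
      intro n hn; have := hc n hn; omega
    obtain ⟨γ, hγ, hth⟩ := good_through_pfx t h m
    -- γ stays through pfx and equals 1 from m on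
    have hall : ∀ n ≥ m, Through γ (pfx t n) ∧ γ n = 1 := by
      intro n hn
      induction n with
      | zero =>
        have hm : m = 0 := Nat.le_zero.mp hn
        subst hm
        have h1 : γ 0 = 1 := by
          by_contra h0
          have : γ 0 = 0 := by omega
          exact absurd (hkey γ hγ 0 hth this) (by simpa using hc 0 (le_refl 0))
        exact ⟨hth, h1⟩
      | succ n ih =>
        rcases Nat.lt_or_ge n m with hlt | hge
        · have hm : m = n + 1 := by omega
          subst hm
          have h1 : γ (n+1) = 1 := by
            by_contra h0
            have : γ (n+1) = 0 := by omega
            exact absurd (hkey γ hγ (n+1) hth this) (by simpa using hc (n+1) (le_refl _))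
          exact ⟨hth, h1⟩
        · obtain ⟨hthn, h1n⟩ := ih hge
          have hthn1 : Through γ (pfx t (n+1)) := by
            have := through_succ hthn
            rw [length_pfx, h1n] at this
            have hβn : β n = 1 := hc' n hge
            show Through γ (pfx t n ++ [nextStep t (pfx t n)])
            have : Through γ (pfx t n ++ [(1 : Fin 2)]) := this
            rwa [show nextStep t (pfx t n) = 1 from hβn]
          have h1 : γ (n+1) = 1 := by
            by_contra h0
            have : γ (n+1) = 0 := by omega
            have := hkey γ hγ (n+1) hthn1 this
            have := hc (n+1) (by omega)
            exact absurd ‹β (n+1) = 0› (by simpa using this)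
          exact ⟨hthn1, h1⟩
    obtain ⟨n, hn, h0⟩ := hγ.2 m
    have := (hall n hn).2
    omega
  refine ⟨β, ⟨hlab, hleft⟩, ?_⟩
  rintro γ hγ ⟨n, hagree, hγ0, hβ1⟩
  -- γ goes through pfx t n
  have hth : Through γ (pfx t n) := by
    unfold Through
    rw [length_pfx, ← hpre]
    unfold pre
    congr 1
    ext i
    exact congrArg Fin.val (hagree i i.2)
  have := hkey γ hγ n hth hγ0
  rw [this] at hβ1
  exact absurd hβ1 (by decide)
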